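/- Let q be a prime power, h ≥ 2, f, g : F_{q^h} → F_q nonzero F_q-linear maps, and α ∈ F_{q^h} \ F_q. Suppose (1) g(1) = g(α) = 1, (2) f(1/α) ≠ 0, and (3) f((k−1)/(k(k−1)α − k²)) ≠ 1 for all k ∈ F_q with k ≠ 0, 1. Then the sets L = {(x : f(x) : y) : x ∈ F_{q^h}, y ∈ F_q, (x,y) ≠ (0,0)} and L' = {(y' : x' : g(x') + y'α) : x' ∈ F_{q^h}, y' ∈ F_q, (x',y') ≠ (0,0)} are disjoint subsets of PG(2, q^h). -/

import Mathlib

/-- The relative trace `x ↦ x + x^q + ⋯ + x^{q^{h-1}}`. -/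
def Tr (q h : ℕ) {K : Type*} [Field K] (x : K) : K :=
  ∑ i ∈ Finset.range h, x ^ q ^ i

/-- The line of `PG(2, K)` with equation `a 0 * X + a 1 * Y + a 2 * Z = 0`. -/
def projLine {K : Type*} [Field K] (a : Fin 3 → K) :
    Set (Projectivization K (Fin 3 → K)) :=
  {P | ∑ i, a i * P.rep i = 0}

/-- A subset of `PG(2, K)` is a line if it is `projLine a` for some nonzero `a`. -/
def IsLine {K : Type*} [Field K] (ℓ : Set (Projectivization K (Fin 3 → K))) : Prop :=
  ∃ a : Fin 3 → K, a ≠ 0 ∧ ℓ = projLine a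

/-- The trace-construction point set
`{(x : Tr(x) : y) : x ∈ F_{q^h}, y ∈ F_q, (x,y) ≠ (0,0)}` in `PG(2, q^h)`. -/
def traceSet (q h : ℕ) (F K : Type*) [Field F] [Field K] [Algebra F K] :
    Set (Projectivization K (Fin 3 → K)) :=
  {P | ∃ (x : K) (y : F), (x ≠ 0 ∨ y ≠ 0) ∧
    ∃ hv : (![x, Tr q h x, algebraMap F K y] : Fin 3 → K) ≠ 0,
      P = Projectivization.mk K (![x, Tr q h x, algebraMap F K y]) hv}

/-- Under conditions (1)–(3) on `f, g, α`, the R\'edei-type blocking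
sets `L = {(x : f(x) : y)}` and `L' = {(y' : x' : g(x') + y'α)}` are disjoint. -/
theorem stmt_11 {F K : Type*} [Field F] [Field K] [Algebra F K]
    [Fintype F] [Fintype K]
    (q h : ℕ) (hq : IsPrimePow q) (hcard : Fintype.card F = q)
    (hh : 2 ≤ h) (hrank : Module.finrank F K = h)
    (f g : K →ₗ[F] F) (hf : f ≠ 0) (hg : g ≠ 0)
    (α : K) (hα : α ∉ Set.range (algebraMap F K))
    (h1 : g 1 = 1 ∧ g α = 1)
    (h2 : f (1 / α) ≠ 0)
    (h3 : ∀ k : F, k ≠ 0 → k ≠ 1 →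
      f ((algebraMap F K k - 1) /
        (algebraMap F K k * (algebraMap F K k - 1) * α - algebraMap F K k ^ 2)) ≠ 1)
    (L L' : Set (Projectivization K (Fin 3 → K)))
    (hL : L = {P | ∃ (x : K) (y : F), (x ≠ 0 ∨ y ≠ 0) ∧
      ∃ hv : (![x, algebraMap F K (f x), algebraMap F K y] : Fin 3 → K) ≠ 0,
        P = Projectivization.mk K (![x, algebraMap F K (f x), algebraMap F K y]) hv})
    (hL' : L' = {P | ∃ (x' : K) (y' : F), (x' ≠ 0 ∨ y' ≠ 0) ∧
      ∃ hv : (![algebraMap F K y', x',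
          algebraMap F K (g x') + algebraMap F K y' * α] : Fin 3 → K) ≠ 0,
        P = Projectivization.mk K
          (![algebraMap F K y', x', algebraMap F K (g x') + algebraMap F K y' * α]) hv}) :
    Disjoint L L' := by
  classical
  subst hL hL'
  set e := algebraMap F K with he
  have hinj : Function.Injective e := (algebraMap F K).injective
  have hne : ∀ a : F, a ≠ 0 → e a ≠ 0 := fun a ha hz => ha (hinj (hz.trans (map_zero e).symm))
  have key : ∀ a b : F, e b * α + e a = 0 → b = 0 := by
    intro a b hab
    by_contra hb
    refine hα ⟨-a / b, ?_⟩
    have hbK : e b ≠ 0 := hne b hb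
    rw [map_div₀, map_neg]
    field_simp
    linear_combination -hab
  rw [Set.disjoint_left]
  rintro P ⟨x, y, hxy, hv, rfl⟩ ⟨x', y', hxy', hv', hPe⟩
  rw [Projectivization.mk_eq_mk_iff] at hPe
  obtain ⟨c, hc⟩ := hPe
  have hcne : (c : K) ≠ 0 := c.ne_zero
  have e0 : x = c * e y' := by
    have := congrFun hc 0; simpa [Units.smul_def] using this.symm
  have e1 : e (f x) = c * x' := by
    have := congrFun hc 1; simpa [Units.smul_def] using this.symm
  have e2 : e y = c * (e (g x') + e y' * α) := by
    have := congrFun hc 2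
    simp only [Units.smul_def, Pi.smul_apply, smul_eq_mul] at this
    simp at this
    linear_combination -this
  have hy'0 : y' ≠ 0 := by
    intro h0
    subst h0
    rw [map_zero, mul_zero] at e0
    subst e0
    rw [map_zero, map_zero] at e1
    rcases hxy' with h | h
    · exact h (by field_simp at e1; simpa [hcne] using e1.symm)
    · exact h rfl
  have hey' : e y' ≠ 0 := hne y' hy'0
  have hx0 : x ≠ 0 := by rw [e0]; exact mul_ne_zero hcne hey'
  have hy0 : y ≠ 0 := by
    intro h0
    subst h0
    rw [map_zero] at e2
    have hz : e y' * α + e (g x') = 0 := by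
      rcases mul_eq_zero.mp e2.symm with h | h
      · exact absurd h hcne
      · linear_combination h
    exact hy'0 (key _ _ hz)
  rcases eq_or_ne x' 0 with hx' | hx'
  · -- case x' = 0
    subst hx'
    rw [mul_zero] at e1
    have hfx : f x = 0 := hinj (e1.trans (map_zero e).symm)
    rw [map_zero, map_zero, zero_add] at e2
    have hα0 : α ≠ 0 := fun hz => hα ⟨0, by simp [hz]⟩
    have hxe : x = y • (1 / α) := by
      rw [Algebra.smul_def, ← he]
      field_simp
      rw [e2, e0]; ring
    rw [hxe, map_smul, smul_eq_mul] at hfx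
    rcases mul_eq_zero.mp hfx with h | h
    · exact hy0 h
    · exact h2 h
  · -- case x' ≠ 0
    set k := f x with hk
    have hk0 : k ≠ 0 := by
      intro h0
      rw [h0, map_zero] at e1
      exact hx' (by rcases mul_eq_zero.mp e1.symm with h | h; exact absurd h hcne; exact h)
    have hey : e y ≠ 0 := hne y hy0
    have hek : e k ≠ 0 := hne k hk0
    -- the key linear relation in K
    have F1 : e y * x' = (e (g x') + e y' * α) * e k := by rw [e2, e1]; ring
    have hx'decomp : x' = ((k * g x') / y) • (1 : K) + ((k * y') / y) • α := by
      rw [Algebra.smul_def, Algebra.smul_def, ← he, map_div₀, map_div₀, map_mul, map_mul]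
      field_simp
      linear_combination F1
    have hs : g x' * (y - k) = k * y' := by
      have := congrArg g hx'decomp
      rw [map_add, map_smul, map_smul, h1.1, h1.2, smul_eq_mul, smul_eq_mul,
        mul_one, mul_one] at this
      field_simp at this
      linear_combination this
    have hyk : y ≠ k := by
      intro h0
      apply hy'0
      have h' : k * y' = 0 := by rw [← hs, h0, sub_self, mul_zero]
      exact (mul_eq_zero.mp h').resolve_left hk0
    have hu0 : k / y ≠ 0 := div_ne_zero hk0 hy0
    have hu1 : k / y ≠ 1 := by
      intro h0
      exact hyk ((div_eq_one_iff_eq hy0).mp h0).symm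
    have hsK : e (g x') * (e y - e k) = e k * e y' := by
      have := congrArg e hs
      rw [map_mul, map_sub, map_mul] at this
      exact this
    have E : x * (e (g x') + e y' * α) = e y * e y' := by rw [e0, e2]; ring
    have step1 : (x * ((e k - e y) * α - e k)) * e y' = (e y * (e k - e y)) * e y' := by
      linear_combination (e k - e y) * E + x * hsK
    have step : x * ((e k - e y) * α - e k) = e y * (e k - e y) :=
      mul_right_cancel₀ hey' step1
    have hDw : e (k / y) * (e (k / y) - 1) * α - e (k / y) ^ 2 ≠ 0 := by
      intro h0
      have hb : (k / y) * (k / y - 1) = 0 := by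
        refine key (-((k / y) ^ 2)) ((k / y) * (k / y - 1)) ?_
        rw [map_mul, map_sub, map_one, map_neg, map_pow]
        linear_combination h0
      rcases mul_eq_zero.mp hb with h | h
      · exact hu0 h
      · exact hu1 (sub_eq_zero.mp h)
    have claim : x * (e (k / y) * (e (k / y) - 1) * α - e (k / y) ^ 2)
        = e k * (e (k / y) - 1) := by
      rw [map_div₀]
      have hinv : e y * (e y)⁻¹ = 1 := mul_inv_cancel₀ hey
      linear_combination (e k / e y ^ 2) * step +
        (x * e k * (e y)⁻¹ * α + e k ^ 2 * (e y)⁻¹ - e k * (1 + e y * (e y)⁻¹)) * hinv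
    have hxw : x = k • ((e (k / y) - 1) /
        (e (k / y) * (e (k / y) - 1) * α - e (k / y) ^ 2)) := by
      rw [Algebra.smul_def, ← he, mul_div_assoc', eq_div_iff hDw]
      exact claim
    apply h3 (k / y) hu0 hu1
    have hfx : f x = k := rfl
    rw [hxw, map_smul, smul_eq_mul] at hfx
    exact mul_left_cancel₀ hk0 (hfx.trans (mul_one k).symm)
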